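/- Lemma (uniform exponential decay for the source problem, Lemma 5.2, part 2). Fix a real 𝔫 ≥ 1 and γ̄ ∈ (0,1). There exist θ* ∈ (0,1) and C ≥ 0, with θ* depending only on 𝔫 and γ̄ and C depending only on 𝔫, with the following property: for every directed graph on a finite vertex set V = {0,…,N−1} with distinguished vertex 0, with 𝒩 i ≠ ∅ for every i ∈ V and N_k^h ≤ 𝔫 for all h ∈ ℕ, k ∈ V, for every k ∈ V and r ≥ 1 with k ∼ᵣ 0, and for all nonnegative reals (Aⁱ), (Bⁱ), E ≥ 0 and positive reals (αᵢ), (βᵢ), (α′ᵢ), (β′ᵢ) satisfying αᵢ·Aⁱ + βᵢ·Bⁱ ≤ E·𝟙_{i=k} + α′ᵢ·∑_{j∈𝒩 i} Aʲ + β′ᵢ·∑_{j∈𝒩 i} Bʲ for every i ∈ V, if γ := max over i ∈ V of max( α′ᵢ / (min_{j∈𝒩 i} αⱼ), β′ᵢ / (min_{j∈𝒩 i} βⱼ) ) satisfies γ ≤ θ*, then α₀·A⁰ + β₀·B⁰ ≤ C·γ̄^r·E. -/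

import Mathlib

lemma geom_aux {q : ℝ} (hq0 : 0 < q) (hq1 : q < 1) (a b : ℕ) :
    ∑ h ∈ Finset.Ico a b, q ^ h ≤ q ^ a / (1 - q) := by
  have h1 : (0:ℝ) < 1 - q := by linarith
  rcases le_or_gt b a with h | h
  · rw [Finset.Ico_eq_empty (by omega)]
    simp only [Finset.sum_empty]
    positivity
  · rw [Finset.sum_Ico_eq_sum_range]
    have e : ∀ i ∈ Finset.range (b - a), q ^ (a + i) = q ^ a * q ^ i := by
      intro i _; rw [pow_add]
    rw [Finset.sum_congr rfl e, ← Finset.mul_sum]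
    have hgeom : ∑ i ∈ Finset.range (b - a), q ^ i ≤ 1 / (1 - q) := by
      rw [geom_sum_eq (ne_of_lt hq1)]
      rw [show (q ^ (b-a) - 1) / (q - 1) = (1 - q ^ (b-a)) / (1 - q) by
        rw [div_eq_div_iff (by linarith) (by linarith)]; ring]
      rw [div_le_div_iff₀ h1 h1]
      have : (0:ℝ) ≤ q ^ (b - a) := by positivity
      nlinarith
    calc q ^ a * ∑ i ∈ Finset.range (b - a), q ^ i ≤ q ^ a * (1 / (1 - q)) := by
          apply mul_le_mul_of_nonneg_left hgeom (by positivity)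
      _ = q ^ a / (1 - q) := by ring

theorem stmt3 (n : ℝ) (hn : 1 ≤ n) :
    ∃ C : ℝ, 0 ≤ C ∧
      ∀ γbar : ℝ, γbar ∈ Set.Ioo (0 : ℝ) 1 →
      ∃ θstar : ℝ, θstar ∈ Set.Ioo (0 : ℝ) 1 ∧
      ∀ (N : ℕ) (_ : NeZero N)
        (𝒩 : Fin N → Finset (Fin N)), (∀ i, i ∉ 𝒩 i) → (∀ i, (𝒩 i).Nonempty) →
      ∀ S : ℕ → Finset (Fin N), S 0 = {0} →
        (∀ m, S (m + 1) = ((S m).biUnion 𝒩) \ ((Finset.range (m + 1)).biUnion S)) →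
        (∀ (h : ℕ) (k : Fin N), (((S h).filter fun j => k ∈ 𝒩 j).card : ℝ) ≤ n) →
      ∀ (k : Fin N) (r : ℕ), 1 ≤ r → k ∈ S r →
      ∀ (A B α β α' β' : Fin N → ℝ) (E : ℝ), 0 ≤ E →
        (∀ i, 0 ≤ A i) → (∀ i, 0 ≤ B i) →
        (∀ i, 0 < α i) → (∀ i, 0 < β i) → (∀ i, 0 < α' i) → (∀ i, 0 < β' i) →
        (∀ i, α i * A i + β i * B i ≤
          (if i = k then E else 0) + α' i * ∑ j ∈ 𝒩 i, A j + β' i * ∑ j ∈ 𝒩 i, B j) →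
        ∀ γ : ℝ,
          (∀ i, ∀ j ∈ 𝒩 i, α' i ≤ γ * α j ∧ β' i ≤ γ * β j) →
          γ ≤ θstar →
          α 0 * A 0 + β 0 * B 0 ≤ C * γbar ^ r * E := by
  refine ⟨2, by norm_num, ?_⟩
  rintro q ⟨hq0, hq1⟩
  have hn0 : (0:ℝ) < n := by linarith
  have hq1'' : (0:ℝ) < 1 - q := by linarith
  refine ⟨q * (1 - q) / (2 * n), ⟨by positivity, ?_⟩, ?_⟩
  · rw [div_lt_one (by positivity)]
    nlinarith
  intro N _ 𝒩 h𝒩self h𝒩ne S hS0 hS1 hcard k r hr hkr A B α β α' β' E hE hA hB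
    hα hβ hα' hβ' hineq γ hγrat hγθ
  set x : Fin N → ℝ := fun i => α i * A i + β i * B i with hx
  have hx0 : ∀ i, 0 ≤ x i := fun i =>
    add_nonneg (mul_nonneg (hα i).le (hA i)) (mul_nonneg (hβ i).le (hB i))
  have hγpos : 0 < γ := by
    obtain ⟨j0, hj0⟩ := h𝒩ne 0
    have h1 := (hγrat 0 j0 hj0).1
    nlinarith [hα' 0, hα j0]
  -- disjointness of spheres
  have hdisj : ∀ h m : ℕ, h < m → Disjoint (S h) (S m) := by
    intro h m hm
    obtain ⟨t, rfl⟩ : ∃ t, m = t + 1 := ⟨m - 1, by omega⟩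
    rw [hS1 t]
    have hsub : S h ⊆ (Finset.range (t + 1)).biUnion S :=
      Finset.subset_biUnion_of_mem S (by simp; omega)
    exact Finset.disjoint_sdiff.mono_left hsub
  have hdisj' : ∀ h m : ℕ, h ≠ m → Disjoint (S h) (S m) := by
    intro h m hm
    rcases lt_or_gt_of_ne hm with hlt | hgt
    · exact hdisj h m hlt
    · exact (hdisj m h hgt).symm
  -- emptiness
  have hempty : ∀ m, S m = ∅ → ∀ h, m ≤ h → S h = ∅ := by
    intro m hm h hmh
    induction h, hmh using Nat.le_induction with
    | base => exact hm
    | succ p hp ih => rw [hS1, ih]; simp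
  have hNempty : ∃ m, m ≤ N ∧ S m = ∅ := by
    by_contra hc
    push_neg at hc
    have hne : ∀ m ∈ Finset.range (N + 1), (S m).Nonempty := by
      intro m hm
      simp only [Finset.mem_range] at hm
      exact hc m (by omega)
    have h1 : ((Finset.range (N + 1)).biUnion S).card
        = ∑ m ∈ Finset.range (N + 1), (S m).card :=
      Finset.card_biUnion (fun a _ b _ hab => hdisj' a b hab)
    have h2 : ((Finset.range (N + 1)).biUnion S).card ≤ N := by
      calc ((Finset.range (N + 1)).biUnion S).card ≤ Fintype.card (Fin N) :=
            Finset.card_le_univ _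
        _ = N := by simp
    have h3 : N + 1 ≤ ∑ m ∈ Finset.range (N + 1), (S m).card := by
      calc N + 1 = ∑ _m ∈ Finset.range (N + 1), 1 := by simp
        _ ≤ ∑ m ∈ Finset.range (N + 1), (S m).card :=
            Finset.sum_le_sum (fun m hm => Finset.card_pos.2 (hne m hm))
    omega
  obtain ⟨m0, hm0N, hm0⟩ := hNempty
  have hrN : r ≤ N := by
    by_contra hcon
    push_neg at hcon
    have := hempty m0 hm0 r (by omega)
    rw [this] at hkr
    simp at hkr
  have hSN1 : S (N + 1) = ∅ := hempty m0 hm0 (N + 1) (by omega)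
  set M : ℕ → ℝ := fun h => ∑ i ∈ S h, x i with hM
  have hM0 : ∀ h, 0 ≤ M h := fun h => Finset.sum_nonneg fun i _ => hx0 i
  -- pointwise inequality
  have hpt : ∀ i, x i ≤ (if i = k then E else 0) + γ * ∑ j ∈ 𝒩 i, x j := by
    intro i
    have h1 : α' i * ∑ j ∈ 𝒩 i, A j ≤ ∑ j ∈ 𝒩 i, γ * (α j * A j) := by
      rw [Finset.mul_sum]
      apply Finset.sum_le_sum
      intro j hj
      have hr1 := (hγrat i j hj).1
      have := hA j
      nlinarith
    have h2 : β' i * ∑ j ∈ 𝒩 i, B j ≤ ∑ j ∈ 𝒩 i, γ * (β j * B j) := by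
      rw [Finset.mul_sum]
      apply Finset.sum_le_sum
      intro j hj
      have hr2 := (hγrat i j hj).2
      have := hB j
      nlinarith
    have h3 : (∑ j ∈ 𝒩 i, γ * (α j * A j)) + ∑ j ∈ 𝒩 i, γ * (β j * B j)
        = γ * ∑ j ∈ 𝒩 i, x j := by
      rw [← Finset.sum_add_distrib, Finset.mul_sum]
      apply Finset.sum_congr rfl
      intro j _
      simp only [hx]
      ring
    have h4 := hineq i
    simp only [hx]
    linarith
  -- neighbours land in spheres up to h+1
  have hnb : ∀ (h : ℕ), ∀ i ∈ S h, 𝒩 i ⊆ (Finset.range (h + 2)).biUnion S := by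
    intro h i hi j hj
    have hj2 : j ∈ (S h).biUnion 𝒩 := Finset.mem_biUnion.2 ⟨i, hi, hj⟩
    by_cases hc : j ∈ (Finset.range (h + 1)).biUnion S
    · obtain ⟨m, hm, hjm⟩ := Finset.mem_biUnion.1 hc
      simp only [Finset.mem_range] at hm
      exact Finset.mem_biUnion.2 ⟨m, Finset.mem_range.2 (by omega), hjm⟩
    · have : j ∈ S (h + 1) := by rw [hS1]; exact Finset.mem_sdiff.2 ⟨hj2, hc⟩
      exact Finset.mem_biUnion.2 ⟨h + 1, Finset.mem_range.2 (by omega), this⟩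
  -- sphere inequality
  have hsph : ∀ h : ℕ, M h ≤ (if k ∈ S h then E else 0)
      + γ * n * ∑ m ∈ Finset.range (h + 2), M m := by
    intro h
    have step1 : M h ≤ (∑ i ∈ S h, if i = k then E else 0)
        + γ * ∑ i ∈ S h, ∑ j ∈ 𝒩 i, x j := by
      calc M h ≤ ∑ i ∈ S h, ((if i = k then E else 0) + γ * ∑ j ∈ 𝒩 i, x j) :=
            Finset.sum_le_sum (fun i _ => hpt i)
        _ = _ := by rw [Finset.sum_add_distrib, Finset.mul_sum]
    have step2 : (∑ i ∈ S h, if i = k then E else 0) = (if k ∈ S h then E else 0) :=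
      Finset.sum_ite_eq' (S h) k (fun _ => E)
    have step3 : ∑ i ∈ S h, ∑ j ∈ 𝒩 i, x j
        ≤ n * ∑ m ∈ Finset.range (h + 2), M m := by
      set T := (Finset.range (h + 2)).biUnion S with hT
      have e1 : ∀ i ∈ S h, ∑ j ∈ 𝒩 i, x j = ∑ j ∈ T, if j ∈ 𝒩 i then x j else 0 := by
        intro i hi
        rw [← Finset.sum_filter]
        congr 1
        ext j
        simp only [Finset.mem_filter]
        exact ⟨fun hj => ⟨hnb h i hi hj, hj⟩, fun hj => hj.2⟩
      rw [Finset.sum_congr rfl e1, Finset.sum_comm]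
      have e2 : ∀ j ∈ T, (∑ i ∈ S h, if j ∈ 𝒩 i then x j else 0) ≤ n * x j := by
        intro j _
        rw [← Finset.sum_filter, Finset.sum_const, nsmul_eq_mul]
        exact mul_le_mul_of_nonneg_right (hcard h j) (hx0 j)
      calc ∑ j ∈ T, ∑ i ∈ S h, (if j ∈ 𝒩 i then x j else 0)
            ≤ ∑ j ∈ T, n * x j := Finset.sum_le_sum e2
        _ = n * ∑ j ∈ T, x j := by rw [Finset.mul_sum]
        _ = n * ∑ m ∈ Finset.range (h + 2), M m := by
            rw [hT, Finset.sum_biUnion]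
            intro a _ b _ hab
            exact hdisj' a b hab
    have step4 : γ * (∑ i ∈ S h, ∑ j ∈ 𝒩 i, x j)
        ≤ γ * (n * ∑ m ∈ Finset.range (h + 2), M m) :=
      mul_le_mul_of_nonneg_left step3 hγpos.le
    have e5 : γ * (n * ∑ m ∈ Finset.range (h + 2), M m)
        = γ * n * ∑ m ∈ Finset.range (h + 2), M m := by ring
    linarith
  set Ψ := ∑ h ∈ Finset.range (N + 1), q ^ h * M h with hΨ
  have hΨ0 : 0 ≤ Ψ :=
    Finset.sum_nonneg fun h _ => mul_nonneg (by positivity) (hM0 h)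
  -- step B : source term
  have hB1 : (∑ h ∈ Finset.range (N + 1), q ^ h * (if k ∈ S h then E else 0))
      = q ^ r * E := by
    have e : ∀ h ∈ Finset.range (N + 1),
        q ^ h * (if k ∈ S h then E else 0) = if h = r then q ^ h * E else 0 := by
      intro h _
      by_cases hc : h = r
      · subst hc; simp [hkr]
      · have hk : k ∉ S h := by
          intro hk
          exact (Finset.disjoint_left.1 (hdisj' h r hc)) hk hkr
        simp [hk, hc]
    rw [Finset.sum_congr rfl e, Finset.sum_ite_eq' (Finset.range (N + 1)) r
      (fun h => q ^ h * E)]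
    simp [Finset.mem_range, Nat.lt_succ_iff, hrN]
  -- step C : double sum bound
  have hq1' : (0:ℝ) < 1 - q := by linarith
  have hC1 : ∑ h ∈ Finset.range (N + 1), q ^ h * ∑ m ∈ Finset.range (h + 2), M m
      ≤ (1 / (q * (1 - q))) * ∑ m ∈ Finset.range (N + 2), q ^ m * M m := by
    have c1 : ∀ h ∈ Finset.range (N + 1),
        q ^ h * ∑ m ∈ Finset.range (h + 2), M m
        = ∑ m ∈ Finset.range (N + 2), (if m ≤ h + 1 then q ^ h * M m else 0) := by
      intro h hh
      simp only [Finset.mem_range] at hh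
      rw [Finset.mul_sum, ← Finset.sum_filter]
      congr 1
      ext m
      simp only [Finset.mem_filter, Finset.mem_range]
      omega
    rw [Finset.sum_congr rfl c1, Finset.sum_comm]
    have c2 : ∀ m ∈ Finset.range (N + 2),
        (∑ h ∈ Finset.range (N + 1), if m ≤ h + 1 then q ^ h * M m else 0)
        ≤ (1 / (q * (1 - q))) * (q ^ m * M m) := by
      intro m _
      have e1 : (∑ h ∈ Finset.range (N + 1), if m ≤ h + 1 then q ^ h * M m else 0)
          = (∑ h ∈ Finset.range (N + 1), if m ≤ h + 1 then q ^ h else 0) * M m := by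
        rw [Finset.sum_mul]
        apply Finset.sum_congr rfl
        intro h _
        by_cases hc : m ≤ h + 1 <;> simp [hc]
      rw [e1]
      have e2 : (∑ h ∈ Finset.range (N + 1), if m ≤ h + 1 then q ^ h else 0)
          = ∑ h ∈ Finset.Ico (m - 1) (N + 1), q ^ h := by
        rw [← Finset.sum_filter]
        congr 1
        ext h
        simp only [Finset.mem_filter, Finset.mem_range, Finset.mem_Ico]
        omega
      have e3 : (∑ h ∈ Finset.range (N + 1), if m ≤ h + 1 then q ^ h else 0)
          ≤ q ^ m / (q * (1 - q)) := by
        rw [e2]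
        calc ∑ h ∈ Finset.Ico (m - 1) (N + 1), q ^ h ≤ q ^ (m - 1) / (1 - q) :=
              geom_aux hq0 hq1 _ _
          _ ≤ q ^ m / (q * (1 - q)) := by
              rw [div_le_div_iff₀ hq1' (by positivity)]
              have : q ^ (m - 1) * q ≤ q ^ m := by
                cases m with
                | zero => simpa using hq1.le
                | succ s => rw [show s + 1 - 1 = s from rfl, pow_succ]
              nlinarith [pow_nonneg hq0.le (m - 1), pow_nonneg hq0.le m]
      calc (∑ h ∈ Finset.range (N + 1), if m ≤ h + 1 then q ^ h else 0) * M m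
            ≤ (q ^ m / (q * (1 - q))) * M m :=
              mul_le_mul_of_nonneg_right e3 (hM0 m)
        _ = (1 / (q * (1 - q))) * (q ^ m * M m) := by ring
    calc ∑ m ∈ Finset.range (N + 2), ∑ h ∈ Finset.range (N + 1),
          (if m ≤ h + 1 then q ^ h * M m else 0)
          ≤ ∑ m ∈ Finset.range (N + 2), (1 / (q * (1 - q))) * (q ^ m * M m) :=
            Finset.sum_le_sum c2
      _ = (1 / (q * (1 - q))) * ∑ m ∈ Finset.range (N + 2), q ^ m * M m := by
          rw [Finset.mul_sum]
  have hMN1 : M (N + 1) = 0 := by simp [hM, hSN1]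
  have hΨ'eq : ∑ m ∈ Finset.range (N + 2), q ^ m * M m = Ψ := by
    rw [Finset.sum_range_succ, hMN1, mul_zero, add_zero]
  rw [hΨ'eq] at hC1
  -- combine
  have key : Ψ ≤ q ^ r * E + (γ * n) * ((1 / (q * (1 - q))) * Ψ) := by
    have s1 : Ψ ≤ ∑ h ∈ Finset.range (N + 1),
        (q ^ h * (if k ∈ S h then E else 0)
          + q ^ h * (γ * n * ∑ m ∈ Finset.range (h + 2), M m)) := by
      apply Finset.sum_le_sum
      intro h _
      have := hsph h
      have hqh : (0:ℝ) ≤ q ^ h := by positivity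
      nlinarith
    have s2 : ∑ h ∈ Finset.range (N + 1),
        (q ^ h * (if k ∈ S h then E else 0)
          + q ^ h * (γ * n * ∑ m ∈ Finset.range (h + 2), M m))
        = (∑ h ∈ Finset.range (N + 1), q ^ h * (if k ∈ S h then E else 0))
          + (γ * n) * ∑ h ∈ Finset.range (N + 1),
              q ^ h * ∑ m ∈ Finset.range (h + 2), M m := by
      rw [Finset.sum_add_distrib, Finset.mul_sum]
      congr 1
      apply Finset.sum_congr rfl
      intro h _
      ring
    have s3 : (γ * n) * (∑ h ∈ Finset.range (N + 1),
        q ^ h * ∑ m ∈ Finset.range (h + 2), M m)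
        ≤ (γ * n) * ((1 / (q * (1 - q))) * Ψ) :=
      mul_le_mul_of_nonneg_left hC1 (by positivity)
    rw [hB1] at s2
    linarith
  have hfrac : (γ * n) * (1 / (q * (1 - q))) ≤ 1 / 2 := by
    rw [mul_one_div, div_le_iff₀ (by positivity)]
    have h1 := mul_le_mul_of_nonneg_right hγθ hn0.le
    have e : q * (1 - q) / (2 * n) * n = 1 / 2 * (q * (1 - q)) := by
      field_simp
    linarith
  have final1 : Ψ ≤ q ^ r * E + (1 / 2) * Ψ := by
    have h1 : (γ * n) * ((1 / (q * (1 - q))) * Ψ)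
        = ((γ * n) * (1 / (q * (1 - q)))) * Ψ := by ring
    have h2 : ((γ * n) * (1 / (q * (1 - q)))) * Ψ ≤ (1 / 2) * Ψ :=
      mul_le_mul_of_nonneg_right hfrac hΨ0
    linarith
  have final2 : Ψ ≤ 2 * (q ^ r * E) := by linarith
  have hM0eq : M 0 = x 0 := by simp [hM, hS0]
  have hxle : q ^ 0 * M 0 ≤ Ψ := by
    rw [hΨ]
    apply Finset.single_le_sum (f := fun h => q ^ h * M h)
      (fun h _ => mul_nonneg (by positivity) (hM0 h))
    simp
  rw [pow_zero, one_mul, hM0eq] at hxle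
  have hx0eq : x 0 = α 0 * A 0 + β 0 * B 0 := rfl
  linarith
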